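/- Let f : (Fin n → Bool) → Bool be a total Boolean function, let x : Fin n → Bool be an input, and let B be a minimal sensitive block of x with respect to f. Then the cardinality of B is at most the sensitivity s(f) of f. -/

import Mathlib

/-- `flipBlock x B` is the input obtained from `x` by flipping every bit whose index lies in `B`. -/
def flipBlock {n : ℕ} (x : Fin n → Bool) (B : Finset (Fin n)) : Fin n → Bool :=
  fun i => if i ∈ B then !(x i) else x i

/-- `B` is a sensitive block of `x` with respect to `f` if flipping the bits in `B` changes the
value of `f`. -/
def SensitiveBlock {n : ℕ} (f : (Fin n → Bool) → Bool) (x : Fin n → Bool)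
    (B : Finset (Fin n)) : Prop :=
  f (flipBlock x B) ≠ f x

/-- `B` is a minimal sensitive block of `x` if it is a sensitive block and no proper subset of it
is a sensitive block. -/
def MinimalSensitiveBlock {n : ℕ} (f : (Fin n → Bool) → Bool) (x : Fin n → Bool)
    (B : Finset (Fin n)) : Prop :=
  SensitiveBlock f x B ∧ ∀ C : Finset (Fin n), C ⊂ B → ¬ SensitiveBlock f x C

/-- The sensitivity of `f`: the maximum over inputs `y` of the number of indices `i` such that
flipping bit `i` of `y` changes the value of `f`. -/
def sensitivity {n : ℕ} (f : (Fin n → Bool) → Bool) : ℕ :=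
  Finset.univ.sup fun y : Fin n → Bool =>
    (Finset.univ.filter fun i : Fin n => f (flipBlock y {i}) ≠ f y).card

lemma flipBlock_flip_flip {n : ℕ} (x : Fin n → Bool) (B : Finset (Fin n)) (i : Fin n) (hi : i ∈ B) :
    flipBlock (flipBlock x B) {i} = flipBlock x (B.erase i) := by
  funext j
  simp only [flipBlock, Finset.mem_singleton, Finset.mem_erase]
  by_cases h : j = i
  · subst h; simp [hi]
  · simp [h]

theorem minimal_sensitive_block_card_le_sensitivity {n : ℕ}
    (f : (Fin n → Bool) → Bool) (x : Fin n → Bool) (B : Finset (Fin n))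
    (hB : MinimalSensitiveBlock f x B) :
    B.card ≤ sensitivity f := by
  obtain ⟨hsens, hmin⟩ := hB
  set y := flipBlock x B with hy
  have key : ∀ i ∈ B, f (flipBlock y {i}) ≠ f y := by
    intro i hi
    rw [hy, flipBlock_flip_flip x B i hi]
    have h1 : ¬ SensitiveBlock f x (B.erase i) :=
      hmin _ (Finset.erase_ssubset hi)
    unfold SensitiveBlock at h1
    push_neg at h1
    rw [h1]
    exact fun h => hsens h.symm
  calc B.card ≤ (Finset.univ.filter fun i : Fin n => f (flipBlock y {i}) ≠ f y).card := by
        apply Finset.card_le_card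
        intro i hi
        simp [key i hi]
      _ ≤ sensitivity f := by unfold sensitivity; exact Finset.le_sup (f := fun y : Fin n → Bool => (Finset.univ.filter fun i : Fin n => f (flipBlock y {i}) ≠ f y).card) (Finset.mem_univ y)
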